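/- Let d : ℝ^p → ℝ be a differentiable 1-strongly convex function with Bregman distance ξ(x,y) := d(y) − d(x) − ⟨∇d(x), y − x⟩. Let g : ℝ^p → ℝ be differentiable with Hölder continuous gradient of exponent v ∈ [0,1] and constant M_v ≥ 0, let h : ℝ^p → ℝ be convex, let ε > 0 and M > (1/ε)^{(1−v)/(1+v)}·M_v^{2/(1+v)}. If x̂ is a minimizer over y of the map y ↦ g(x) + ⟨∇g(x), y − x⟩ + M·ξ(y, x) + h(y), then g(x̂) + h(x̂) ≤ g(x) + ⟨∇g(x), x̂ − x⟩ + M·ξ(x̂, x) + h(x̂) + ε/2. -/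

import Mathlib

open scoped InnerProductSpace

lemma holder_descent {p : ℕ} (v Mv : ℝ) (hv0 : 0 ≤ v) (hMv : 0 ≤ Mv)
    (g : EuclideanSpace ℝ (Fin p) → ℝ) (hg : Differentiable ℝ g)
    (hHolder : ∀ x y : EuclideanSpace ℝ (Fin p),
      ‖gradient g x - gradient g y‖ ≤ Mv * ‖x - y‖ ^ v)
    (x y : EuclideanSpace ℝ (Fin p)) :
    g y ≤ g x + ⟪gradient g x, y - x⟫_ℝ + Mv / (1 + v) * ‖y - x‖ ^ (1 + v) := by
  have hv1p : (0:ℝ) < 1 + v := by linarith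
  set u := y - x with hu
  set t := ‖u‖ with ht
  have ht0 : (0:ℝ) ≤ t := norm_nonneg u
  have hline : ∀ s : ℝ, HasDerivAt (fun r : ℝ => g (x + r • u))
      ⟪gradient g (x + s • u), u⟫_ℝ s := by
    intro s
    have h1 : HasFDerivAt g (InnerProductSpace.toDual ℝ _ (gradient g (x + s • u))) (x + s • u) :=
      hasGradientAt_iff_hasFDerivAt.mp (hg _).hasGradientAt
    have h2 : HasDerivAt (fun r : ℝ => x + r • u) u s := by
      simpa using ((hasDerivAt_id s).smul_const u).const_add x
    exact h1.comp_hasDerivAt s h2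
  set ψ : ℝ → ℝ := fun s => g (x + s • u) - g x - s * ⟪gradient g x, u⟫_ℝ with hψdef
  have hψ : ∀ s : ℝ, HasDerivAt ψ ⟪gradient g (x + s • u) - gradient g x, u⟫_ℝ s := by
    intro s
    have := ((hline s).sub_const (g x)).sub (hasDerivAt_mul_const ⟪gradient g x, u⟫_ℝ)
    rw [inner_sub_left]; exact this
  set B : ℝ → ℝ := fun s => Mv * t ^ (1 + v) / (1 + v) * s ^ (1 + v) with hBdef
  have hB : ∀ s : ℝ, HasDerivAt B (Mv * t ^ (1 + v) * s ^ v) s := by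
    intro s
    have h1 : HasDerivAt (fun r : ℝ => r ^ (1 + v)) ((1 + v) * s ^ ((1 + v) - 1)) s :=
      Real.hasDerivAt_rpow_const (Or.inr (by linarith))
    have h2 := h1.const_mul (Mv * t ^ (1 + v) / (1 + v))
    have he : (1 + v) - 1 = v := by ring
    rw [he] at h2
    have : Mv * t ^ (1 + v) / (1 + v) * ((1 + v) * s ^ v) = Mv * t ^ (1 + v) * s ^ v := by
      field_simp
    rwa [this] at h2
  have bound : ∀ s ∈ Set.Ico (0:ℝ) 1, ‖⟪gradient g (x + s • u) - gradient g x, u⟫_ℝ‖ ≤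
      Mv * t ^ (1 + v) * s ^ v := by
    intro s hs
    have hs0 : (0:ℝ) ≤ s := hs.1
    calc ‖⟪gradient g (x + s • u) - gradient g x, u⟫_ℝ‖
        ≤ ‖gradient g (x + s • u) - gradient g x‖ * ‖u‖ := norm_inner_le_norm _ _
      _ ≤ Mv * ‖(x + s • u) - x‖ ^ v * t := by
          apply mul_le_mul_of_nonneg_right _ ht0
          exact hHolder _ _
      _ = Mv * t ^ (1 + v) * s ^ v := by
          rw [add_sub_cancel_left, norm_smul, Real.norm_eq_abs, abs_of_nonneg hs0,
            Real.mul_rpow hs0 ht0]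
          rw [Real.rpow_add' ht0 (by linarith : (1:ℝ) + v ≠ 0), Real.rpow_one]
          ring
  have hcont : ContinuousOn ψ (Set.Icc (0:ℝ) 1) := fun s _ =>
    (hψ s).continuousAt.continuousWithinAt
  have hψ0 : ‖ψ 0‖ ≤ B 0 := by
    simp [hψdef, hBdef, Real.zero_rpow (by linarith : (1:ℝ) + v ≠ 0)]
  have := image_norm_le_of_norm_deriv_right_le_deriv_boundary hcont
    (fun s _ => (hψ s).hasDerivWithinAt) hψ0 hB bound
    (Set.right_mem_Icc.mpr zero_le_one)
  have h1 : ψ 1 ≤ B 1 := (le_abs_self _).trans this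
  have hx1 : x + (1:ℝ) • u = y := by simp [hu]
  rw [hψdef, hBdef] at h1
  simp only [hx1, one_mul, Real.one_rpow, mul_one] at h1
  have he : Mv / (1 + v) * t ^ (1 + v) = Mv * t ^ (1 + v) / (1 + v) := by ring
  rw [he]
  linarith [h1]


lemma scalar_bound (v Mv ε M t : ℝ) (hv0 : 0 ≤ v) (hv1 : v ≤ 1) (hMv : 0 ≤ Mv) (hε : 0 < ε)
    (hM : M > (1 / ε) ^ ((1 - v) / (1 + v)) * Mv ^ (2 / (1 + v))) (ht : 0 ≤ t) :
    Mv / (1 + v) * t ^ (1 + v) ≤ M / 2 * t ^ 2 + ε / 2 := by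
  have hv1p : (0:ℝ) < 1 + v := by linarith
  have hMpos : 0 < M := lt_of_le_of_lt (by positivity) hM
  have hT0 : 0 ≤ t ^ (1 + v) := Real.rpow_nonneg ht _
  rcases eq_or_lt_of_le hMv with hMv0 | hMvpos
  · rw [← hMv0]
    have h0 : (0:ℝ) / (1 + v) * t ^ (1 + v) = 0 := by ring
    rw [h0]
    positivity
  rcases eq_or_lt_of_le hv1 with hve | hvlt
  · -- v = 1
    subst hve
    have hM' : Mv < M := by
      have h0 : ((1:ℝ) - 1) / (1 + 1) = 0 := by norm_num
      have h1 : (2:ℝ) / (1 + 1) = 1 := by norm_num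
      rw [h0, h1, Real.rpow_zero, Real.rpow_one, one_mul] at hM
      exact hM
    rw [show (1:ℝ) + 1 = 2 by norm_num, show t ^ (2:ℝ) = t ^ 2 by
      rw [← Real.rpow_natCast t 2]; norm_num]
    nlinarith [mul_nonneg (sub_nonneg.mpr hM'.le) (sq_nonneg t), hε.le]
  · -- v < 1
    have h1v : (0:ℝ) < 1 - v := by linarith
    set q : ℝ := 2 / (1 - v) with hq
    have hpq : Real.HolderConjugate (2 / (1 + v)) q := by
      rw [Real.holderConjugate_iff]; constructor
      · rw [lt_div_iff₀ hv1p]; linarith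
      · rw [hq]; field_simp; ring
    set b : ℝ := Mv * M ^ (-((1 + v) / 2)) with hb
    have hbpos : 0 < b := by positivity
    set a : ℝ := (M * t ^ 2) ^ ((1 + v) / 2) with ha
    have hMt0 : 0 ≤ M * t ^ 2 := by positivity
    have ha0 : 0 ≤ a := Real.rpow_nonneg hMt0 _
    have hY := Real.young_inequality_of_nonneg ha0 hbpos.le hpq
    have hap : a ^ (2 / (1 + v)) = M * t ^ 2 := by
      rw [ha, ← Real.rpow_mul hMt0,
        show (1 + v) / 2 * (2 / (1 + v)) = 1 by field_simp, Real.rpow_one]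
    have hMM : M ^ ((1 + v) / 2) * M ^ (-((1 + v) / 2)) = 1 := by
      rw [← Real.rpow_add hMpos]; simp
    have hab : a * b = Mv * t ^ (1 + v) := by
      rw [ha, hb, Real.mul_rpow hMpos.le (by positivity), ← Real.rpow_natCast t 2,
        ← Real.rpow_mul ht, show ((2:ℕ):ℝ) * ((1 + v) / 2) = 1 + v by push_cast; ring]
      linear_combination (Mv * t ^ (1 + v)) * hMM
    have hkey : Mv ^ q ≤ ε * M ^ ((1 + v) / (1 - v)) := by
      have h1 : (ε⁻¹) ^ ((1 - v) / (1 + v)) * Mv ^ (2 / (1 + v)) ≤ M := by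
        rw [← one_div]; exact hM.le
      have h2 := Real.rpow_le_rpow (by positivity) h1
        (by positivity : (0:ℝ) ≤ (1 + v) / (1 - v))
      rw [Real.mul_rpow (by positivity) (by positivity),
        ← Real.rpow_mul (by positivity), ← Real.rpow_mul hMv,
        show (1 - v) / (1 + v) * ((1 + v) / (1 - v)) = 1 by field_simp,
        show 2 / (1 + v) * ((1 + v) / (1 - v)) = q by rw [hq]; field_simp,
        Real.rpow_one] at h2
      have h3 := mul_le_mul_of_nonneg_left h2 hε.le
      rw [← mul_assoc, mul_inv_cancel₀ hε.ne', one_mul] at h3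
      exact h3
    have hbq : b ^ q ≤ ε := by
      rw [hb, Real.mul_rpow hMv (by positivity), ← Real.rpow_mul hMpos.le,
        show -((1 + v) / 2) * q = -((1 + v) / (1 - v)) by rw [hq]; field_simp,
        Real.rpow_neg hMpos.le, mul_comm, inv_mul_eq_div, div_le_iff₀ (by positivity)]
      linarith [hkey]
    have hbq0 : 0 ≤ b ^ q := Real.rpow_nonneg hbpos.le _
    rw [hap, hab] at hY
    have hq2 : (M * t ^ 2) / (2 / (1 + v)) = M * t ^ 2 * ((1 + v) / 2) := by
      field_simp
    have hq3 : b ^ q / q = b ^ q * ((1 - v) / 2) := by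
      rw [hq]; field_simp
    rw [hq2, hq3] at hY
    rw [div_mul_eq_mul_div, div_le_iff₀ hv1p]
    nlinarith [hY, hbq, hbq0, mul_nonneg hMpos.le (sq_nonneg t)]

/-- Let `d` be a differentiable 1-strongly convex prox-function with Bregman distance
`ξ(x,y) = d(y) − d(x) − ⟨∇d(x), y − x⟩`, `g` differentiable with Hölder continuous
gradient of exponent `v ∈ [0,1]` and constant `M_v ≥ 0`, `h` convex, `ε > 0` and
`M > (1/ε)^{(1−v)/(1+v)}·M_v^{2/(1+v)}`. If `x̂` minimizes
`y ↦ g(x) + ⟨∇g(x), y − x⟩ + M·ξ(y,x) + h(y)`, then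
`g(x̂) + h(x̂) ≤ g(x) + ⟨∇g(x), x̂ − x⟩ + M·ξ(x̂,x) + h(x̂) + ε/2`. -/
theorem statement3 {p : ℕ} (v Mv ε M : ℝ) (hv0 : 0 ≤ v) (hv1 : v ≤ 1) (hMv : 0 ≤ Mv)
    (hε : 0 < ε) (hM : M > (1 / ε) ^ ((1 - v) / (1 + v)) * Mv ^ (2 / (1 + v)))
    (d : EuclideanSpace ℝ (Fin p) → ℝ) (hd : Differentiable ℝ d)
    (hdsc : ∀ x y : EuclideanSpace ℝ (Fin p),
      d x + ⟪gradient d x, y - x⟫_ℝ + 1 / 2 * ‖y - x‖ ^ 2 ≤ d y)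
    (xi : EuclideanSpace ℝ (Fin p) → EuclideanSpace ℝ (Fin p) → ℝ)
    (hxi : ∀ x y : EuclideanSpace ℝ (Fin p), xi x y = d y - d x - ⟪gradient d x, y - x⟫_ℝ)
    (g : EuclideanSpace ℝ (Fin p) → ℝ) (hg : Differentiable ℝ g)
    (hHolder : ∀ x y : EuclideanSpace ℝ (Fin p),
      ‖gradient g x - gradient g y‖ ≤ Mv * ‖x - y‖ ^ v)
    (h : EuclideanSpace ℝ (Fin p) → ℝ) (hh : ConvexOn ℝ Set.univ h)
    (x xhat : EuclideanSpace ℝ (Fin p))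
    (hxhat : ∀ y : EuclideanSpace ℝ (Fin p),
      g x + ⟪gradient g x, xhat - x⟫_ℝ + M * xi xhat x + h xhat ≤
        g x + ⟪gradient g x, y - x⟫_ℝ + M * xi y x + h y) :
    g xhat + h xhat ≤ g x + ⟪gradient g x, xhat - x⟫_ℝ + M * xi xhat x + h xhat + ε / 2 := by
  have hMpos : 0 < M := lt_of_le_of_lt (by positivity) hM
  have hxiA : 1 / 2 * ‖xhat - x‖ ^ 2 ≤ xi xhat x := by
    have h1 := hdsc xhat x
    rw [hxi, norm_sub_rev xhat x]
    linarith
  have hB := holder_descent v Mv hv0 hMv g hg hHolder x xhat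
  have hC := scalar_bound v Mv ε M ‖xhat - x‖ hv0 hv1 hMv hε hM (norm_nonneg _)
  have hMxi : M / 2 * ‖xhat - x‖ ^ 2 ≤ M * xi xhat x := by
    calc M / 2 * ‖xhat - x‖ ^ 2 = M * (1 / 2 * ‖xhat - x‖ ^ 2) := by ring
      _ ≤ M * xi xhat x := mul_le_mul_of_nonneg_left hxiA hMpos.le
  linarith [hB, hC, hMxi]
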